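/- Let G be a finite simple graph with n vertices that contains no independent set of three vertices (equivalently, G is O3-free, where O3 is the empty graph on 3 vertices). Then the chromatic number of G equals n minus the maximum size of a matching in the complement of G: χ(G) = n − ν(Ḡ), where ν(Ḡ) denotes the number of edges in a maximum matching of the complement graph Ḡ. -/

import Mathlib

/-- For any matching `M` in a graph `H` on a finite vertex type, there is a
"representative" map `r` which is idempotent, identifies exactly the matched pairs,
and whose fixed-point set has `|V| - |E(M)|` elements. -/
lemma matching_rep {V : Type*} [Fintype V] {H : SimpleGraph V} {M : H.Subgraph}
    (hM : M.IsMatching) :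
    ∃ r : V → V, (∀ v, r (r v) = r v) ∧
      (∀ u v, u ≠ v → r u = r v → M.Adj u v) ∧
      (∀ u v, M.Adj u v → r u = r v) ∧
      Set.ncard {v | r v = v} = Fintype.card V - M.edgeSet.ncard := by
  classical
  letI : LinearOrder V := LinearOrder.lift' (Fintype.equivFin V) (Fintype.equivFin V).injective
  -- partner function
  set q : V → V := fun v => if h : v ∈ M.verts then (hM h).choose else v with hq
  have hq1 : ∀ v (h : v ∈ M.verts), M.Adj v (q v) := by
    intro v h
    simp only [hq, dif_pos h]
    exact (hM h).choose_spec.1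
  have hq2 : ∀ u v, M.Adj u v → q u = v := by
    intro u v huv
    have hu : u ∈ M.verts := M.edge_vert huv
    have := ((hM hu).choose_spec.2 v huv).symm
    simpa only [hq, dif_pos hu] using this
  have hmemq : ∀ v, v ∈ M.verts → q v ∈ M.verts := fun v h => M.edge_vert (hq1 v h).symm
  have hqq : ∀ v, v ∈ M.verts → q (q v) = v := fun v h => hq2 _ _ (hq1 v h).symm
  have hqne : ∀ v (h : v ∈ M.verts), q v ≠ v := fun v h => (M.adj_sub (hq1 v h)).ne'
  -- representative function
  set r : V → V := fun v => if v ∈ M.verts then min v (q v) else v with hr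
  have hrmem : ∀ v, v ∉ M.verts → r v = v := by intro v h; simp [hr, h]
  have hrval : ∀ v, v ∈ M.verts → r v = min v (q v) := by intro v h; simp [hr, h]
  have hradj : ∀ u v, M.Adj u v → r u = r v := by
    intro u v huv
    have hu := M.edge_vert huv
    have hv := M.edge_vert huv.symm
    rw [hrval u hu, hrval v hv, hq2 u v huv, hq2 v u huv.symm, min_comm]
  have hrmin : ∀ v, v ∈ M.verts → r v = v ∨ r v = q v := by
    intro v h; rw [hrval v h]; exact min_choice _ _
  have hadj_of_eq : ∀ u v, u ≠ v → r u = r v → M.Adj u v := by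
    intro u v hne he
    by_cases hu : u ∈ M.verts
    · by_cases hv : v ∈ M.verts
      · rcases hrmin u hu with h1 | h1 <;> rcases hrmin v hv with h2 | h2
        · exact absurd (h1 ▸ h2 ▸ he) hne
        · -- r u = u, r v = q v, so u = q v
          have : u = q v := by rw [← h1, he, h2]
          exact this ▸ (hq1 v hv).symm
        · have : q u = v := by rw [← h2, ← he, h1]
          exact this ▸ hq1 u hu
        · have : q u = q v := by rw [← h1, he, h2]
          have : u = v := by
            have := congrArg q this
            rwa [hqq u hu, hqq v hv] at this
          exact absurd this hne
      · -- v unmatched: r v = v, so min u (q u) = v hence v = q u, contradiction with v ∉ verts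
        have hvv := hrmem v hv
        rcases hrmin u hu with h1 | h1
        · exact absurd (by rw [← h1, he, hvv]) hne
        · have : q u = v := by rw [← h1, he, hvv]
          exact absurd (this ▸ hmemq u hu) hv
    · have huu := hrmem u hu
      by_cases hv : v ∈ M.verts
      · rcases hrmin v hv with h2 | h2
        · exact absurd (by rw [← huu, he, h2]) hne
        · have : q v = u := by rw [← h2, ← he, huu]
          exact absurd (this ▸ hmemq v hv) hu
      · exact absurd (by rw [← huu, he, hrmem v hv]) hne
  have hidem : ∀ v, r (r v) = r v := by
    intro v
    by_cases h : v ∈ M.verts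
    · rcases hrmin v h with h1 | h1
      · rw [h1, h1]
      · have hqv : q v ∈ M.verts := hmemq v h
        rw [h1, hrval _ hqv, hqq v h]
        rw [hrval v h] at h1
        rw [min_comm]
        exact h1
    · rw [hrmem v h, hrmem v h]
  refine ⟨r, hidem, hadj_of_eq, hradj, ?_⟩
  -- counting
  have hNsub : ∀ v, r v ≠ v → v ∈ M.verts := by
    intro v h; by_contra hv; exact h (hrmem v hv)
  have hNq : ∀ v, r v ≠ v → r v = q v := by
    intro v h
    rcases hrmin v (hNsub v h) with h1 | h1
    · exact absurd h1 h
    · exact h1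
  have key : Set.ncard {v | r v ≠ v} = M.edgeSet.ncard := by
    have himg : (fun v => s(v, q v)) '' {v | r v ≠ v} = M.edgeSet := by
      ext e
      induction e with
      | h a b =>
        simp only [Set.mem_image, Set.mem_setOf_eq, SimpleGraph.Subgraph.mem_edgeSet]
        constructor
        · rintro ⟨v, hv, he⟩
          rw [Sym2.eq_iff] at he
          rcases he with ⟨h1, h2⟩ | ⟨h1, h2⟩
          · exact h1 ▸ h2 ▸ hq1 v (hNsub v hv)
          · exact h2 ▸ h1 ▸ (hq1 v (hNsub v hv)).symm
        · intro hab
          have ha := M.edge_vert hab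
          have hb := M.edge_vert hab.symm
          have hqa : q a = b := hq2 a b hab
          have hqb : q b = a := hq2 b a hab.symm
          have hne : a ≠ b := (M.adj_sub hab).ne
          rcases min_choice a b with hm | hm
          · refine ⟨b, ?_, by rw [hqb, Sym2.eq_swap]⟩
            rw [hrval b hb, hqb, min_comm, hm]
            exact fun h => hne h
          · refine ⟨a, ?_, by rw [hqa]⟩
            rw [hrval a ha, hqa, hm]
            exact fun h => hne h.symm
    have hinj : Set.InjOn (fun v => s(v, q v)) {v | r v ≠ v} := by
      intro u hu v hv he
      simp only [Sym2.eq_iff] at he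
      rcases he with ⟨h1, _⟩ | ⟨h1, h2⟩
      · exact h1
      · -- u = q v, q u = v
        by_contra hne
        have huverts := hNsub u hu
        have hvverts := hNsub v hv
        have hru : r u = q u := hNq u hu
        have hrv : r v = q v := hNq v hv
        -- r u = q u = v, r v = q v = u, but also M.Adj u v so r u = r v
        have hadj : M.Adj u v := h2 ▸ hq1 u huverts
        have hvqv : v = q v := by
          calc v = q u := h2.symm
            _ = r u := hru.symm
            _ = r v := hradj u v hadj
            _ = q v := hrv
        exact hqne v hvverts hvqv.symm
    rw [← himg, Set.ncard_image_of_injOn hinj]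
  have hcompl : {v | r v = v} = {v | r v ≠ v}ᶜ := by
    ext v; simp [Set.mem_compl_iff]
  have hsum := Set.ncard_add_ncard_compl {v | r v ≠ v}
  rw [← hcompl] at hsum
  have huniv : (Set.univ : Set V).ncard = Fintype.card V := by
    rw [Set.ncard_univ, Nat.card_eq_fintype_card]
  have hnc : Nat.card V = Fintype.card V := Nat.card_eq_fintype_card
  omega

/-- If a finite graph `G` on `n` vertices has no independent set of
three vertices (it is `O₃`-free), then `χ(G) = n − ν(Gᶜ)`, where `ν(Gᶜ)` is the maximum
number of edges in a matching of the complement of `G`. -/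
theorem chromaticNumber_of_O3_free
    {V : Type*} [Fintype V] (G : SimpleGraph V)
    (hO3 : ¬ ∃ S : Finset V, S.card = 3 ∧ ∀ u ∈ S, ∀ v ∈ S, u ≠ v → ¬ G.Adj u v) :
    G.chromaticNumber =
      ((Fintype.card V -
        sSup {m : ℕ | ∃ M : SimpleGraph.Subgraph Gᶜ, M.IsMatching ∧ M.edgeSet.ncard = m}
        : ℕ) : ℕ∞) := by
  classical
  set K : Set ℕ := {m : ℕ | ∃ M : SimpleGraph.Subgraph Gᶜ, M.IsMatching ∧ M.edgeSet.ncard = m}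
    with hK
  have h0 : 0 ∈ K := by
    refine ⟨⊥, ?_, ?_⟩
    · intro v hv
      simp only [SimpleGraph.Subgraph.verts_bot, Set.mem_empty_iff_false] at hv
    · simp
  have hbdd : BddAbove K := by
    refine ⟨Nat.card (Sym2 V), ?_⟩
    rintro m ⟨M, _, rfl⟩
    rw [← Set.ncard_univ]
    exact Set.ncard_le_ncard (Set.subset_univ _) Set.finite_univ
  set ν : ℕ := sSup K with hν
  have hνmem : ν ∈ K := Nat.sSup_mem ⟨0, h0⟩ hbdd
  refine le_antisymm ?_ ?_
  · -- upper bound: G is colorable with n - ν colors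
    obtain ⟨M, hM, hMcard⟩ := hνmem
    obtain ⟨r, hidem, hadj_of_eq, _, hcard⟩ := matching_rep hM
    have hcol : G.Colorable (Fintype.card V - ν) := by
      haveI : Fintype ({v | r v = v} : Set V) := Fintype.ofFinite _
      have C : G.Coloring ({v | r v = v} : Set V) := by
        refine SimpleGraph.Coloring.mk (fun v => ⟨r v, hidem v⟩) ?_
        intro u v huv heq
        have hre : r u = r v := congrArg Subtype.val heq
        have : M.Adj u v := hadj_of_eq u v huv.ne hre
        have := M.adj_sub this
        rw [G.compl_adj] at this
        exact this.2 huv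
      have := C.colorable
      have hcc : Fintype.card ({v | r v = v} : Set V) = Fintype.card V - ν := by
        rw [← Nat.card_eq_fintype_card, Nat.card_coe_set_eq, hcard, hMcard]
      rwa [hcc] at this
    exact hcol.chromaticNumber_le
  · -- lower bound
    rw [SimpleGraph.chromaticNumber_eq_biInf]
    refine le_iInf₂ fun m hm => ?_
    rw [Nat.cast_le]
    obtain ⟨C⟩ := hm
    -- matching in Gᶜ given by color classes of size ≥ 2
    set M' : SimpleGraph.Subgraph Gᶜ :=
      { verts := {v | ∃ w, w ≠ v ∧ C w = C v}
        Adj := fun u v => u ≠ v ∧ C u = C v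
        adj_sub := by
          intro u v h
          rw [G.compl_adj]
          exact ⟨h.1, fun hadj => C.valid hadj h.2⟩
        edge_vert := by
          rintro u v ⟨h1, h2⟩
          exact ⟨v, fun h => h1 h.symm, h2.symm⟩
        symm := by
          constructor; rintro u v ⟨h1, h2⟩
          exact ⟨fun h => h1 h.symm, h2.symm⟩ } with hM'def
    have hM' : M'.IsMatching := by
      rintro v ⟨w, hw, hcw⟩
      refine ⟨w, ⟨fun h => hw h.symm, hcw.symm⟩, ?_⟩
      rintro y ⟨hy1, hy2⟩
      by_contra hyw
      -- {v, w, y} is an independent set of size 3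
      apply hO3
      refine ⟨{v, w, y}, ?_, ?_⟩
      · rw [Finset.card_insert_of_notMem, Finset.card_insert_of_notMem, Finset.card_singleton]
        · simp only [Finset.mem_singleton]; exact fun h => hyw h.symm
        · simp only [Finset.mem_insert, Finset.mem_singleton]
          push_neg
          exact ⟨fun h => hw h.symm, fun h => hy1 h⟩
      · intro a ha b hb hab hGab
        have hca : C a = C v := by
          simp only [Finset.mem_insert, Finset.mem_singleton] at ha
          rcases ha with rfl | rfl | rfl
          · rfl
          · exact hcw
          · exact hy2.symm
        have hcb : C b = C v := by
          simp only [Finset.mem_insert, Finset.mem_singleton] at hb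
          rcases hb with rfl | rfl | rfl
          · rfl
          · exact hcw
          · exact hy2.symm
        exact C.valid hGab (hca.trans hcb.symm)
    have hKe : M'.edgeSet.ncard ∈ K := ⟨M', hM', rfl⟩
    have he_le : M'.edgeSet.ncard ≤ ν := le_csSup hbdd hKe
    obtain ⟨r, hidem, _, hradj, hcard⟩ := matching_rep hM'
    -- C is injective on fixed points of r
    have hinj : Function.Injective (fun v : ({v | r v = v} : Set V) => C v.1) := by
      rintro ⟨u, hu⟩ ⟨v, hv⟩ heq
      simp only [Subtype.mk_eq_mk]
      by_contra hne
      have hadj : M'.Adj u v := ⟨hne, heq⟩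
      have := hradj u v hadj
      rw [Set.mem_setOf_eq] at hu hv
      rw [hu, hv] at this
      exact hne this
    have hle : ({v | r v = v} : Set V).ncard ≤ m := by
      have := Nat.card_le_card_of_injective _ hinj
      rwa [Nat.card_coe_set_eq, Nat.card_eq_fintype_card, Fintype.card_fin] at this
    rw [hcard] at hle
    omega
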